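/- Let L be a finitely generated free abelian group with a nondegenerate symmetric bilinear form (·,·), and let k ∈ Hom(L,ℤ) be a characteristic element, i.e. (x,x) + k(x) ∈ 2ℤ for all x ∈ L. Then the map on the discriminant group D(L) = coker(i_L) given by [d] ↦ (1/2)(d+k, d)_ℚ mod ℤ is a well-defined quadratic function associated with the discriminant bilinear form b_{D(L)}. -/

import Mathlib

/-- Given a finitely generated free abelian group `L` with a nondegenerate symmetric
bilinear form `B`, and a characteristic element `k` of the dual lattice, the map
`[d] ↦ (1/2)(d+k,d)_ℚ mod ℤ` on the discriminant group `coker(i_L)` is a well-defined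
quadratic function associated with the discriminant bilinear form.  The rational
extension of the form is encoded by representatives: if `n • d = B e` with `n ≠ 0`
then `(d₁, d)_ℚ = d₁(e)/n`. -/
theorem discriminant_quadratic_function
    {L : Type*} [AddCommGroup L] [Module ℤ L] [Module.Free ℤ L] [Module.Finite ℤ L]
    (B : L →ₗ[ℤ] L →ₗ[ℤ] ℤ)
    (hsymm : ∀ x y : L, B x y = B y x)
    (hnd : ∀ x : L, (∀ y : L, B x y = 0) → x = 0)
    (k : Module.Dual ℤ L)
    (hchar : ∀ x : L, ∃ m : ℤ, B x x + k x = 2 * m) :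
    ∃ q : Module.Dual ℤ L → AddCircle (1 : ℚ),
      -- the defining formula `q([d]) = (1/2)(d+k,d)_ℚ mod ℤ`
      (∀ (d : Module.Dual ℤ L) (e : L) (n : ℤ), n ≠ 0 → n • d = B e →
        q d = (((d e + k e : ℤ) : ℚ) / (2 * (n : ℚ)) : ℚ)) ∧
      -- well-definedness on the discriminant group `coker(i_L)`
      (∀ (d : Module.Dual ℤ L) (x : L), q (d + B x) = q d) ∧
      -- `q` is a quadratic function associated with the discriminant bilinear form
      (∀ (d₁ d₂ : Module.Dual ℤ L) (e₁ : L) (n : ℤ), n ≠ 0 → n • d₁ = B e₁ →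
        q (d₁ + d₂) - q d₁ - q d₂ = (((d₂ e₁ : ℤ) : ℚ) / (n : ℚ) : ℚ)) := by
  classical
  have hBinj : Function.Injective B := by
    intro x y hxy
    have h : x - y = 0 := hnd _ (fun z => by simp [hxy])
    rwa [sub_eq_zero] at h
  -- existence of representatives
  have hex : ∀ d : Module.Dual ℤ L, ∃ n : ℤ, ∃ e : L, n ≠ 0 ∧ n • d = B e := by
    intro d
    set b := Module.Free.chooseBasis ℤ L with hb
    set M : Matrix (Module.Free.ChooseBasisIndex ℤ L) (Module.Free.ChooseBasisIndex ℤ L) ℤ :=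
      Matrix.of (fun i j => B (b i) (b j)) with hM
    have hMapp : ∀ i j, M i j = B (b i) (b j) := fun i j => rfl
    have hdet : M.det ≠ 0 := by
      intro h0
      obtain ⟨v, hv, hMv⟩ := (Matrix.exists_mulVec_eq_zero_iff).mpr h0
      set x : L := ∑ i, v i • b i with hx
      have hBx : B x = 0 := by
        apply b.ext
        intro j
        have h1 : B x (b j) = ∑ i, v i * M i j := by
          simp [hx, map_sum, smul_eq_mul, hMapp]
        have h2 : M.mulVec v j = 0 := congrFun hMv j
        rw [h1, show (∑ i, v i * M i j) = M.mulVec v j from ?_, h2]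
        · simp
        · rw [Matrix.mulVec, dotProduct]
          exact Finset.sum_congr rfl fun i _ => by rw [mul_comm, hMapp, hMapp, hsymm]
      have hxz : x = 0 := hnd x (fun y => by rw [hBx]; simp)
      apply hv
      funext j
      have := congrArg (fun z => b.repr z j) hxz
      simpa [hx, Finsupp.single_apply] using this
    set c : Module.Free.ChooseBasisIndex ℤ L → ℤ :=
      M.adjugate.mulVec (fun j => d (b j)) with hc
    refine ⟨M.det, ∑ i, c i • b i, hdet, ?_⟩
    apply b.ext
    intro j
    have h1 : B (∑ i, c i • b i) (b j) = ∑ i, c i * M i j := by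
      simp [map_sum, smul_eq_mul, hMapp]
    have h2 : (∑ i, c i * M i j) = M.mulVec c j := by
      rw [Matrix.mulVec, dotProduct]
      exact Finset.sum_congr rfl fun i _ => by rw [mul_comm, hMapp, hMapp, hsymm]
    have h3 : M.mulVec c = M.det • (fun j => d (b j)) := by
      rw [hc, Matrix.mulVec_mulVec, Matrix.mul_adjugate, Matrix.smul_mulVec,
        Matrix.one_mulVec]
    simp only [LinearMap.smul_apply, smul_eq_mul, h1, h2, h3]
    simp
  choose nn ee hnz hrep using hex
  set qQ : Module.Dual ℤ L → ℚ :=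
    fun d => ((d (ee d) + k (ee d) : ℤ) : ℚ) / (2 * (nn d : ℚ)) with hqQ
  -- the rational value is independent of the choice of representative
  have key : ∀ (d : Module.Dual ℤ L) (n : ℤ) (e : L), n ≠ 0 → n • d = B e →
      qQ d = ((d e + k e : ℤ) : ℚ) / (2 * (n : ℚ)) := by
    intro d n e hn he
    have h1 : B (n • ee d) = B (nn d • e) := by
      rw [map_zsmul, map_zsmul, ← hrep d, ← he, ← mul_zsmul, mul_comm, mul_zsmul]
    have h2 : n • ee d = nn d • e := hBinj h1
    have h3 : nn d * (d e + k e) = n * (d (ee d) + k (ee d)) := by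
      have h4 := congrArg (fun z => (d z + k z : ℤ)) h2
      simp only [map_zsmul, smul_eq_mul] at h4
      linear_combination -h4
    have hnd0 : (nn d : ℚ) ≠ 0 := Int.cast_ne_zero.mpr (hnz d)
    have hn0 : (n : ℚ) ≠ 0 := Int.cast_ne_zero.mpr hn
    have hcQ : ((nn d : ℚ)) * ((d e : ℤ) + (k e : ℤ) : ℚ) = (n : ℚ) * ((d (ee d) : ℤ) + (k (ee d) : ℤ) : ℚ) := by
      exact_mod_cast congrArg (fun z : ℤ => (z : ℚ)) h3
    rw [hqQ]
    push_cast
    rw [div_eq_div_iff (mul_ne_zero two_ne_zero hnd0) (mul_ne_zero two_ne_zero hn0)]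
    linear_combination (-2 : ℚ) * hcQ
  refine ⟨fun d => ((qQ d : ℚ) : AddCircle (1 : ℚ)), ?_, ?_, ?_⟩
  · intro d e n hn he
    exact congrArg _ (key d n e hn he)
  · intro d x
    obtain ⟨m, hm⟩ := hchar x
    have hrep' : nn d • (d + B x) = B (ee d + nn d • x) := by
      rw [map_add, map_zsmul, ← hrep d]
      exact smul_add _ _ _
    have hv1 : qQ (d + B x) = ((((d + B x) (ee d + nn d • x) + k (ee d + nn d • x) : ℤ)) : ℚ)
        / (2 * (nn d : ℚ)) := key _ (nn d) _ (hnz d) hrep'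
    have hBe : B x (ee d) = nn d * d x := by
      rw [hsymm, ← hrep d]; simp [smul_eq_mul]
    have hnum : (d + B x) (ee d + nn d • x) + k (ee d + nn d • x)
        = (d (ee d) + k (ee d)) + 2 * nn d * (d x + m) := by
      simp only [LinearMap.add_apply, map_add, map_zsmul, smul_eq_mul]
      rw [hBe]
      linear_combination (nn d) * hm
    have hnd0 : (nn d : ℚ) ≠ 0 := Int.cast_ne_zero.mpr (hnz d)
    have hv2 : qQ (d + B x) = qQ d + ((d x + m : ℤ) : ℚ) := by
      rw [hv1, hnum, hqQ]
      push_cast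
      field_simp
    show ((qQ (d + B x) : ℚ) : AddCircle (1:ℚ)) = ((qQ d : ℚ) : AddCircle (1:ℚ))
    rw [hv2]
    rw [QuotientAddGroup.mk_add]
    convert add_zero _
    exact (QuotientAddGroup.eq_zero_iff _).mpr
      (AddSubgroup.mem_zmultiples_iff.mpr ⟨d x + m, by push_cast; simp⟩)
  · intro d₁ d₂ e₁ n hn he₁
    have hrep12 : (n * nn d₂) • (d₁ + d₂) = B (nn d₂ • e₁ + n • ee d₂) := by
      rw [map_add, map_zsmul, map_zsmul, ← he₁, ← hrep d₂, ← mul_zsmul, ← mul_zsmul,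
        mul_comm (nn d₂) n]
      exact smul_add _ _ _
    have hv12 := key _ (n * nn d₂) _ (mul_ne_zero hn (hnz d₂)) hrep12
    have hv1 := key _ n _ hn he₁
    have hcross : n * d₁ (ee d₂) = nn d₂ * d₂ e₁ := by
      have a1 : n * d₁ (ee d₂) = B e₁ (ee d₂) := by rw [← he₁]; simp [smul_eq_mul]
      have a2 : nn d₂ * d₂ e₁ = B (ee d₂) e₁ := by rw [← hrep d₂]; simp [smul_eq_mul]
      rw [a1, a2, hsymm]
    have hn0 : (n : ℚ) ≠ 0 := Int.cast_ne_zero.mpr hn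
    have hn20 : (nn d₂ : ℚ) ≠ 0 := Int.cast_ne_zero.mpr (hnz d₂)
    have hrat : qQ (d₁ + d₂) - qQ d₁ - qQ d₂ = ((d₂ e₁ : ℤ) : ℚ) / (n : ℚ) := by
      rw [hv12, hv1, hqQ]
      have hcQ : (n : ℚ) * ((d₁ (ee d₂) : ℤ) : ℚ) = ((nn d₂ : ℤ) : ℚ) * ((d₂ e₁ : ℤ) : ℚ) := by
        exact_mod_cast congrArg (fun z : ℤ => (z : ℚ)) hcross
      simp only [LinearMap.add_apply, map_add, map_zsmul, smul_eq_mul]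
      push_cast
      push_cast at hcQ
      field_simp
      ring_nf
      ring_nf at hcQ
      linear_combination hcQ
    rw [show (((qQ (d₁ + d₂) : ℚ)) : AddCircle (1:ℚ)) - qQ d₁ - qQ d₂
        = ((qQ (d₁ + d₂) - qQ d₁ - qQ d₂ : ℚ) : AddCircle (1:ℚ)) by
      rw [QuotientAddGroup.mk_sub, QuotientAddGroup.mk_sub]]
    rw [hrat]
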